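/- Let N = 2, and let a₁ := a_{11} < 0, a₂ := a_{22} < 0 be constants with a₁ + a₂ ≠ 0, and ζ₁, ζ₂ ∈ ℝ. Then the functions K(t,i) = (1/(a₁+a₂)²)[ ζ_{3−i} a_i (1 − e^{(a₁+a₂)(R−t)} + (a₁+a₂)(R−t)) + ζ_i ( a_{3−i}²(R−t) + a_i ( e^{(a₁+a₂)(R−t)} − 1 + a_{3−i}(R−t) ) ) ], i = 1,2, satisfy the ODE system K_t(t,1) + ζ₁ − a₁ K(t,2) + a₁ K(t,1) = 0 and K_t(t,2) + ζ₂ − a₂ K(t,1) + a₂ K(t,2) = 0 with terminal conditions K(R,1) = K(R,2) = 0. -/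

import Mathlib

private lemma aux9 (A B C s R t : ℝ) :
    HasDerivAt (fun t => A + B * Real.exp (s * (R - t)) + C * (R - t))
      (-(B * s * Real.exp (s * (R - t)) + C)) t := by
  have h1 : HasDerivAt (fun t : ℝ => s * (R - t)) (s * -1) t :=
    ((hasDerivAt_id t).const_sub R).const_mul s
  have h3 := ((hasDerivAt_const t A).add (h1.exp.const_mul B)).add
    (((hasDerivAt_id t).const_sub R).const_mul C)
  exact h3.congr_deriv (by ring)

/-- Closed-form solution of the two-regime post-default value-function ODE system
with homogeneous generator: the explicit functions `K(t,1)`, `K(t,2)` satisfy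
`K_t(t,i) + ζ_i - a_i K(t,3-i) + a_i K(t,i) = 0` with `K(R,i) = 0`. -/
theorem stmt9 (a1 a2 ζ1 ζ2 R : ℝ) (ha1 : a1 < 0) (ha2 : a2 < 0) (hsum : a1 + a2 ≠ 0)
    (K1 K2 : ℝ → ℝ)
    (hK1 : ∀ t, K1 t = (1 / (a1 + a2) ^ 2) *
      (ζ2 * a1 * (1 - Real.exp ((a1 + a2) * (R - t)) + (a1 + a2) * (R - t)) +
        ζ1 * (a2 ^ 2 * (R - t) +
          a1 * (Real.exp ((a1 + a2) * (R - t)) - 1 + a2 * (R - t)))))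
    (hK2 : ∀ t, K2 t = (1 / (a1 + a2) ^ 2) *
      (ζ1 * a2 * (1 - Real.exp ((a1 + a2) * (R - t)) + (a1 + a2) * (R - t)) +
        ζ2 * (a1 ^ 2 * (R - t) +
          a2 * (Real.exp ((a1 + a2) * (R - t)) - 1 + a1 * (R - t))))) :
    K1 R = 0 ∧ K2 R = 0 ∧
      (∀ t, HasDerivAt K1 (-(ζ1 - a1 * K2 t + a1 * K1 t)) t) ∧
      (∀ t, HasDerivAt K2 (-(ζ2 - a2 * K1 t + a2 * K2 t)) t) := by
  have hs2 : (a1 + a2) ^ 2 ≠ 0 := pow_ne_zero _ hsum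
  have hK1' : K1 = fun t => (ζ2 * a1 - ζ1 * a1) / (a1 + a2) ^ 2 +
      ((ζ1 * a1 - ζ2 * a1) / (a1 + a2) ^ 2) * Real.exp ((a1 + a2) * (R - t)) +
      ((ζ2 * a1 * (a1 + a2) + ζ1 * a2 ^ 2 + ζ1 * a1 * a2) / (a1 + a2) ^ 2) * (R - t) := by
    funext t; rw [hK1]; field_simp; ring
  have hK2' : K2 = fun t => (ζ1 * a2 - ζ2 * a2) / (a1 + a2) ^ 2 +
      ((ζ2 * a2 - ζ1 * a2) / (a1 + a2) ^ 2) * Real.exp ((a1 + a2) * (R - t)) +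
      ((ζ1 * a2 * (a1 + a2) + ζ2 * a1 ^ 2 + ζ2 * a1 * a2) / (a1 + a2) ^ 2) * (R - t) := by
    funext t; rw [hK2]; field_simp; ring
  refine ⟨by simp [hK1], by simp [hK2], ?_, ?_⟩
  · intro t
    rw [hK1', hK2']
    convert aux9 ((ζ2 * a1 - ζ1 * a1) / (a1 + a2) ^ 2)
      ((ζ1 * a1 - ζ2 * a1) / (a1 + a2) ^ 2)
      ((ζ2 * a1 * (a1 + a2) + ζ1 * a2 ^ 2 + ζ1 * a1 * a2) / (a1 + a2) ^ 2)
      (a1 + a2) R t using 1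
    field_simp
    ring
  · intro t
    rw [hK1', hK2']
    convert aux9 ((ζ1 * a2 - ζ2 * a2) / (a1 + a2) ^ 2)
      ((ζ2 * a2 - ζ1 * a2) / (a1 + a2) ^ 2)
      ((ζ1 * a2 * (a1 + a2) + ζ2 * a1 ^ 2 + ζ2 * a1 * a2) / (a1 + a2) ^ 2)
      (a1 + a2) R t using 1
    field_simp
    ring
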